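/- arXiv:2010.07499 — 2 statements merged into one kernel-verified Lean document; each statement's English description precedes it below -/
import Mathlib

section
/- If L is a linear subspace of ℚ^n, then the image exp(L ⊗_ℚ ℂ) under the coordinatewise exponential map exp: ℂ^n → (ℂ^×)^n is an algebraic subtorus of (ℂ^×)^n; conversely, every algebraic subtorus T ⊆ (ℂ^×)^n equals exp(L ⊗_ℚ ℂ) for some linear subspace L ⊆ ℚ^n. -/
/-- The monomial map `(Kˣ)ᵐ → (Kˣ)ⁿ` determined by an integer matrix `A`. -/
def monomialMap {K : Type} [Field K] {m n : ℕ} (A : Matrix (Fin n) (Fin m) ℤ)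
    (x : Fin m → Kˣ) : Fin n → Kˣ :=
  fun i => ∏ j, x j ^ A i j

/-- An algebraic subtorus of `(Kˣ)ⁿ`: the image of a monomial embedding `(Kˣ)ᵐ ↪ (Kˣ)ⁿ` whose
dual lattice map `ℤᵐ → ℤⁿ` has primitive image (i.e. `ℤⁿ` modulo the image is torsion-free). -/
def IsSubtorus {K : Type} [Field K] {n : ℕ} (T : Set (Fin n → Kˣ)) : Prop :=
  ∃ (m : ℕ) (A : Matrix (Fin n) (Fin m) ℤ),
    Function.Injective (monomialMap (K := K) A) ∧
    (∀ (v : Fin n → ℤ) (k : ℤ), k ≠ 0 →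
      k • v ∈ LinearMap.range (Matrix.mulVecLin A) →
      v ∈ LinearMap.range (Matrix.mulVecLin A)) ∧
    T = Set.range (monomialMap (K := K) A)

/-- The coordinatewise exponential map `ℂⁿ → (ℂˣ)ⁿ`. -/
noncomputable def expTorus {n : ℕ} (z : Fin n → ℂ) : Fin n → ℂˣ :=
  fun i => Units.mk0 (Complex.exp (z i)) (Complex.exp_ne_zero _)

/-- The complexification `L ⊗_ℚ ℂ ⊆ ℂⁿ` of a linear subspace `L ⊆ ℚⁿ`. -/
noncomputable def ratComplexify {n : ℕ} (L : Submodule ℚ (Fin n → ℚ)) : Submodule ℂ (Fin n → ℂ) :=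
  Submodule.span ℂ ((fun (v : Fin n → ℚ) (i : Fin n) => ((v i : ℂ))) '' (L : Set (Fin n → ℚ)))

open Matrix Complex
lemma castMV {R S : Type*} [NonAssocSemiring R] [NonAssocSemiring S] (f : R →+* S) {a b : ℕ}
    (A : Matrix (Fin a) (Fin b) R) (v : Fin b → R) :
    (A.map f).mulVec (fun j => f (v j)) = fun i => f (A.mulVec v i) :=
  funext fun i => (RingHom.map_mulVec f A v i).symm

lemma expTorus_surjective {m : ℕ} : Function.Surjective (expTorus (n := m)) := by
  intro u
  refine ⟨fun j => Complex.log (u j), ?_⟩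
  funext j
  exact Units.ext (by simp [expTorus, Complex.exp_log (u j).ne_zero])

lemma monomialMap_expTorus {m n : ℕ} (A : Matrix (Fin n) (Fin m) ℤ) (w : Fin m → ℂ) :
    monomialMap (K := ℂ) A (expTorus w) = expTorus ((A.map (Int.cast : ℤ → ℂ)).mulVec w) := by
  funext i
  apply Units.ext
  have : ((monomialMap (K := ℂ) A (expTorus w) i : ℂˣ) : ℂ) = ∏ j, Complex.exp (w j) ^ A i j := by
    simp [monomialMap, expTorus, Units.val_zpow_eq_zpow_val]
  rw [this]
  have : ∀ j, Complex.exp (w j) ^ A i j = Complex.exp ((A i j : ℂ) * w j) := fun j =>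
    (Complex.exp_int_mul (w j) (A i j)).symm
  simp only [this, ← Complex.exp_sum, expTorus, mulVec, dotProduct, map_apply]
  rfl

lemma range_monomialMap {m n : ℕ} (A : Matrix (Fin n) (Fin m) ℤ) :
    Set.range (monomialMap (K := ℂ) A)
      = expTorus '' ((LinearMap.range (Matrix.mulVecLin (A.map (Int.cast : ℤ → ℂ)))) :
          Set (Fin n → ℂ)) := by
  ext u
  constructor
  · rintro ⟨x, rfl⟩
    obtain ⟨w, rfl⟩ := expTorus_surjective x
    exact ⟨_, ⟨w, rfl⟩, (monomialMap_expTorus A w).symm⟩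
  · rintro ⟨z, ⟨w, rfl⟩, rfl⟩
    exact ⟨expTorus w, (monomialMap_expTorus A w)⟩

lemma cQ_injective {n : ℕ} :
    Function.Injective (fun (v : Fin n → ℚ) (i : Fin n) => ((v i : ℂ))) := by
  intro a b h
  funext i
  have h2 : ((a i : ℚ) : ℂ) = ((b i : ℚ) : ℂ) := congrFun h i
  exact_mod_cast h2

lemma cQ_smul {n : ℕ} (q : ℚ) (x : Fin n → ℚ) :
    (fun i => (((q • x) i : ℚ) : ℂ)) = (q : ℂ) • fun i => ((x i : ℚ) : ℂ) := by
  funext i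
  push_cast [Pi.smul_apply, smul_eq_mul]
  rfl
lemma span_cols {m n : ℕ} (A : Matrix (Fin n) (Fin m) ℤ) :
    LinearMap.range (Matrix.mulVecLin (A.map (Int.cast : ℤ → ℂ)))
      = ratComplexify (Submodule.span ℚ (Set.range fun j i => ((A i j : ℚ)))) := by
  rw [Matrix.range_mulVecLin]
  apply le_antisymm
  · rw [Submodule.span_le]
    rintro _ ⟨j, rfl⟩
    apply Submodule.subset_span
    refine ⟨fun i => ((A i j : ℚ)), Submodule.subset_span ⟨j, rfl⟩, ?_⟩
    funext i
    simp [transpose_apply, map_apply]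
  · rw [ratComplexify, Submodule.span_le]
    rintro _ ⟨v, hv, rfl⟩
    induction hv using Submodule.span_induction with
    | mem x hx =>
      show (fun i => ((x i : ℚ) : ℂ)) ∈ _
      obtain ⟨j, rfl⟩ := hx
      apply Submodule.subset_span
      exact ⟨j, by funext i; simp [transpose_apply, map_apply]⟩
    | zero =>
      show (fun i => (((0 : Fin n → ℚ) i : ℚ) : ℂ)) ∈ _
      have h0 : (fun i => (((0 : Fin n → ℚ) i : ℚ) : ℂ)) = (0 : Fin n → ℂ) := by
        funext i; simp
      rw [h0]; exact Submodule.zero_mem _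
    | add x y hx hy ihx ihy =>
      show (fun i => (((x + y) i : ℚ) : ℂ)) ∈ _
      have : (fun i => (((x + y) i : ℚ) : ℂ))
          = (fun i => ((x i : ℚ) : ℂ)) + fun i => ((y i : ℚ) : ℂ) := by
        funext i; push_cast [Pi.add_apply]; rfl
      rw [this]; exact Submodule.add_mem _ ihx ihy
    | smul q x hx ihx =>
      show (fun i => (((q • x) i : ℚ) : ℂ)) ∈ _
      rw [cQ_smul]; exact Submodule.smul_mem _ _ ihx

lemma exists_int_den {k : ℕ} (v : Fin k → ℚ) :
    ∃ d : ℤ, d ≠ 0 ∧ ∃ e : Fin k → ℤ, ∀ i, (e i : ℚ) = d * v i := by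
  obtain ⟨b, hb⟩ := IsLocalization.exist_integer_multiples_of_finite (nonZeroDivisors ℤ) v
  choose e he using hb
  refine ⟨(b : ℤ), nonZeroDivisors.coe_ne_zero b, e, fun i => ?_⟩
  have := he i
  simpa [zsmul_eq_mul] using this

lemma mem_of_cQ_mem {n : ℕ} (L : Submodule ℚ (Fin n → ℚ)) (q : Fin n → ℚ)
    (h : (fun i => ((q i : ℂ))) ∈ ratComplexify L) : q ∈ L := by
  obtain ⟨L', hL'⟩ := Submodule.exists_isCompl L
  set p : (Fin n → ℚ) →ₗ[ℚ] (Fin n → ℚ) := L.subtype.comp (L.projectionOnto L' hL') with hp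
  have hpL : ∀ x, p x ∈ L := fun x => (L.projectionOnto L' hL' x).2
  have hpid : ∀ x ∈ L, p x = x := by
    intro x hx
    simp [hp, Submodule.projectionOnto_apply_left hL' ⟨x, hx⟩]
  set B : Matrix (Fin n) (Fin n) ℚ := LinearMap.toMatrix' p with hB
  have hBmv : ∀ x, B.mulVec x = p x := by
    intro x
    rw [← Matrix.toLin'_apply, hB, Matrix.toLin'_toMatrix']
  set Bc : Matrix (Fin n) (Fin n) ℂ := B.map (Rat.cast : ℚ → ℂ) with hBc
  have hcomm : ∀ x : Fin n → ℚ,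
      Bc.mulVec (fun i => ((x i : ℂ))) = fun i => ((B.mulVec x i : ℚ) : ℂ) := by
    intro x
    funext i
    have := RingHom.map_mulVec (Rat.castHom ℂ) B x i
    simpa [hBc, Function.comp_def] using this.symm
  have hinv : ratComplexify L ≤ LinearMap.eqLocus Bc.mulVecLin LinearMap.id := by
    rw [ratComplexify, Submodule.span_le]
    rintro _ ⟨v, hv, rfl⟩
    have : Bc.mulVecLin (fun i => ((v i : ℂ))) = fun i => ((v i : ℂ)) := by
      rw [Matrix.mulVecLin_apply, hcomm, hBmv, hpid v hv]
    exact this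
  have h1 : Bc.mulVec (fun i => ((q i : ℂ))) = fun i => ((q i : ℂ)) := hinv h
  rw [hcomm, hBmv] at h1
  have : p q = q := by
    funext i
    have h2 : ((p q i : ℚ) : ℂ) = ((q i : ℚ) : ℂ) := congrFun h1 i
    exact_mod_cast h2
  rw [← this]
  exact hpL q

lemma subtorus_eq_exp {n : ℕ} (T : Set (Fin n → ℂˣ)) (hT : IsSubtorus T) :
    ∃ L : Submodule ℚ (Fin n → ℚ),
      T = expTorus '' ((ratComplexify L : Set (Fin n → ℂ))) := by
  obtain ⟨m, A, -, -, rfl⟩ := hT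
  refine ⟨Submodule.span ℚ (Set.range fun j i => ((A i j : ℚ))), ?_⟩
  rw [range_monomialMap, span_cols]

noncomputable def cZQ (k : ℕ) : (Fin k → ℤ) →ₗ[ℤ] (Fin k → ℚ) where
  toFun v i := (v i : ℚ)
  map_add' x y := by funext i; push_cast [Pi.add_apply]; ring
  map_smul' c x := by
    funext i
    simp only [Pi.smul_apply, smul_eq_mul, zsmul_eq_mul, RingHom.id_apply]
    push_cast
    ring

lemma test_forward {n : ℕ} (L : Submodule ℚ (Fin n → ℚ)) :
    IsSubtorus (expTorus '' ((ratComplexify L : Set (Fin n → ℂ)))) := by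
  classical
  set M : Submodule ℤ (Fin n → ℤ) := Submodule.comap (cZQ n) (L.restrictScalars ℤ) with hM
  obtain ⟨m, bb⟩ := Submodule.basisOfPid (Pi.basisFun ℤ (Fin n)) M
  set A : Matrix (Fin n) (Fin m) ℤ := Matrix.of (fun i j => (bb j : Fin n → ℤ) i) with hA
  -- range of the integer matrix is M
  have hrange : LinearMap.range (Matrix.mulVecLin A) = M := by
    rw [Matrix.range_mulVecLin]
    have h1 : Set.range A.col = M.subtype '' Set.range bb := by
      ext x
      constructor
      · rintro ⟨j, rfl⟩; exact ⟨bb j, ⟨j, rfl⟩, rfl⟩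
      · rintro ⟨y, ⟨j, rfl⟩, rfl⟩; exact ⟨j, rfl⟩
    rw [h1, ← Submodule.map_span, Module.Basis.span_eq, Submodule.map_top, Submodule.range_subtype]
  -- saturation
  have hsat : ∀ (v : Fin n → ℤ) (k : ℤ), k ≠ 0 →
      k • v ∈ LinearMap.range (Matrix.mulVecLin A) →
      v ∈ LinearMap.range (Matrix.mulVecLin A) := by
    intro v k hk hmem
    rw [hrange] at hmem ⊢
    rw [hM, Submodule.mem_comap, Submodule.restrictScalars_mem] at hmem ⊢
    rw [_root_.map_smul] at hmem
    have h2 : (k : ℚ) • (cZQ n) v ∈ L := by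
      rwa [Int.cast_smul_eq_zsmul]
    rwa [L.smul_mem_iff (by exact_mod_cast hk : (k:ℚ) ≠ 0)] at h2
  -- L is the span of the rational columns
  have hLspan : L = Submodule.span ℚ (Set.range fun j i => ((A i j : ℚ))) := by
    apply le_antisymm
    · intro v hv
      obtain ⟨d, hd, e, he⟩ := exists_int_den v
      have heM : e ∈ M := by
        rw [hM, Submodule.mem_comap, Submodule.restrictScalars_mem]
        have : (cZQ n) e = (d : ℚ) • v := by
          funext i
          rw [Pi.smul_apply, smul_eq_mul]
          exact he i
        rw [this]
        exact L.smul_mem _ hv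
      rw [← hrange] at heM
      obtain ⟨c, hc⟩ := heM
      have hmain : (d : ℚ) • v ∈ Submodule.span ℚ (Set.range fun j i => ((A i j : ℚ))) := by
        have h3 : (d : ℚ) • v
            = (A.map (Int.cast : ℤ → ℚ)).mulVec (fun j => ((c j : ℚ))) := by
          funext i
          have h4 := congrFun (castMV (Int.castRingHom ℚ) A c) i
          rw [Pi.smul_apply, smul_eq_mul, ← he i]
          have h5 : A.mulVec c i = e i := congrFun hc i
          simp only [Int.coe_castRingHom] at h4
          rw [h4, h5]
        rw [h3]
        have h6 : (A.map (Int.cast : ℤ → ℚ)).mulVec (fun j => ((c j : ℚ)))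
            ∈ LinearMap.range (Matrix.mulVecLin (A.map (Int.cast : ℤ → ℚ))) :=
          ⟨(fun j => ((c j : ℚ))), rfl⟩
        rw [Matrix.range_mulVecLin] at h6
        have h7 : Set.range (A.map (Int.cast : ℤ → ℚ)).col
            = Set.range (fun j i => ((A i j : ℚ))) := by
          ext x
          constructor
          · rintro ⟨j, rfl⟩; exact ⟨j, rfl⟩
          · rintro ⟨j, rfl⟩; exact ⟨j, rfl⟩
        rwa [h7] at h6
      have := Submodule.smul_mem _ ((d : ℚ)⁻¹) hmain
      rwa [smul_smul, inv_mul_cancel₀ (by exact_mod_cast hd : (d:ℚ) ≠ 0), one_smul] at this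
    · rw [Submodule.span_le]
      rintro _ ⟨j, rfl⟩
      show (fun i => ((A i j : ℚ))) ∈ (L : Set (Fin n → ℚ))
      exact (bb j).2
  -- injectivity over ℚ
  have hQker : LinearMap.ker (Matrix.mulVecLin (A.map (Int.cast : ℤ → ℚ))) = ⊥ := by
    rw [LinearMap.ker_eq_bot']
    intro c hc
    rw [Matrix.mulVecLin_apply] at hc
    obtain ⟨d, hd, e, he⟩ := exists_int_den c
    have h1 : (A.map (Int.cast : ℤ → ℚ)).mulVec (fun j => ((e j : ℚ))) = 0 := by
      have h2 : (fun j => ((e j : ℚ))) = (d : ℚ) • c := by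
        funext j; rw [Pi.smul_apply, smul_eq_mul]; exact he j
      rw [h2, Matrix.mulVec_smul, hc, smul_zero]
    have h3 : A.mulVec e = 0 := by
      funext i
      have h4 := congrFun (castMV (Int.castRingHom ℚ) A e) i
      simp only [Int.coe_castRingHom] at h4
      have h5 : ((A.mulVec e i : ℤ) : ℚ) = 0 := by rw [← h4]; exact congrFun h1 i
      exact_mod_cast h5
    have h6 : (A.mulVec e) = ((∑ j, e j • bb j : M) : Fin n → ℤ) := by
      funext i
      have h7 : ((∑ j, e j • bb j : M) : Fin n → ℤ) i = ∑ j, e j * (bb j : Fin n → ℤ) i := by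
        have : ((∑ j, e j • bb j : M) : Fin n → ℤ) = ∑ j, e j • (bb j : Fin n → ℤ) := by
          push_cast
          rfl
        rw [this]
        simp [Finset.sum_apply]
      rw [h7]
      simp only [mulVec, dotProduct, hA, of_apply]
      exact Finset.sum_congr rfl fun j _ => mul_comm _ _
    have h8 : (∑ j, e j • bb j : M) = 0 := by
      have h8a := h6.symm.trans h3
      exact ZeroMemClass.coe_eq_zero.mp h8a
    have h9 : ∀ j, e j = 0 := Fintype.linearIndependent_iff.mp bb.linearIndependent e h8
    funext j
    have h10 := he j
    rw [h9 j] at h10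
    have : (d : ℚ) * c j = 0 := by exact_mod_cast h10.symm
    rcases mul_eq_zero.mp this with h | h
    · exact absurd (by exact_mod_cast h : (d : ℚ) = 0) (by exact_mod_cast hd)
    · exact h
  obtain ⟨g, hg⟩ :=
    LinearMap.exists_leftInverse_of_injective (Matrix.mulVecLin (A.map (Int.cast : ℤ → ℚ))) hQker
  have hBA : (LinearMap.toMatrix' g) * (A.map (Int.cast : ℤ → ℚ)) = 1 := by
    have h9 := congrArg LinearMap.toMatrix' hg
    rwa [LinearMap.toMatrix'_comp, LinearMap.toMatrix'_id, ← Matrix.toLin'_apply',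
      LinearMap.toMatrix'_toLin'] at h9
  have hmapmap : (A.map (Int.cast : ℤ → ℚ)).map (Rat.cast : ℚ → ℂ)
      = A.map (Int.cast : ℤ → ℂ) := by
    have hcomp : (Rat.cast : ℚ → ℂ) ∘ (Int.cast : ℤ → ℚ) = (Int.cast : ℤ → ℂ) := by
      funext x; simp
    rw [Matrix.map_map, hcomp]
  have hCleft : ((LinearMap.toMatrix' g).map (Rat.cast : ℚ → ℂ))
      * A.map (Int.cast : ℤ → ℂ) = 1 := by
    have h11 : ((LinearMap.toMatrix' g) * (A.map (Int.cast : ℤ → ℚ))).map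
        ((Rat.castHom ℂ : ℚ →+* ℂ) : ℚ → ℂ)
        = (1 : Matrix (Fin m) (Fin m) ℚ).map ((Rat.castHom ℂ : ℚ →+* ℂ) : ℚ → ℂ) := by
      rw [hBA]
    rw [Matrix.map_mul] at h11
    have h12 : ((Rat.castHom ℂ : ℚ →+* ℂ) : ℚ → ℂ) = (Rat.cast : ℚ → ℂ) := rfl
    rw [h12, hmapmap] at h11
    rw [h11, Matrix.map_one _ (by simp) (by simp)]
  have hCinj : Function.Injective (Matrix.mulVecLin (A.map (Int.cast : ℤ → ℂ))) := by
    intro z z' hzz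
    have h10 := congrArg
      (fun t => ((LinearMap.toMatrix' g).map (Rat.cast : ℚ → ℂ)).mulVec t) hzz
    simpa [Matrix.mulVecLin_apply, Matrix.mulVec_mulVec, hCleft, Matrix.one_mulVec] using h10
  -- kernel of the monomial map is trivial
  have hker : ∀ u : Fin m → ℂˣ, monomialMap (K := ℂ) A u = 1 → u = 1 := by
    intro u hu
    set w : Fin m → ℂ := fun j => Complex.log (u j) with hw
    have hwj : ∀ j, Complex.exp (w j) = ((u j : ℂˣ) : ℂ) := fun j =>
      Complex.exp_log (u j).ne_zero
    have h1 : ∀ i, Complex.exp ((A.map (Int.cast : ℤ → ℂ)).mulVec w i) = 1 := by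
      intro i
      have hval : ((monomialMap (K := ℂ) A u i : ℂˣ) : ℂ) = 1 := by rw [hu]; rfl
      calc Complex.exp ((A.map (Int.cast : ℤ → ℂ)).mulVec w i)
          = ∏ j, Complex.exp ((A i j : ℂ) * w j) := by
            have hmv : (A.map (Int.cast : ℤ → ℂ)).mulVec w i = ∑ j, (A i j : ℂ) * w j := by
              simp [mulVec, dotProduct, map_apply]
            rw [hmv, Complex.exp_sum]
        _ = ∏ j, ((u j : ℂ)) ^ (A i j) := by
            refine Finset.prod_congr rfl fun j _ => ?_
            rw [Complex.exp_int_mul, hwj]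
        _ = 1 := by
            rw [← hval]
            simp [monomialMap, Units.val_zpow_eq_zpow_val]
    choose k hk using fun i => Complex.exp_eq_one_iff.mp (h1 i)
    have hkmem : (fun i => ((k i : ℚ) : ℂ)) ∈ ratComplexify L := by
      have hmem2 : (fun i => ((k i : ℚ) : ℂ))
          ∈ LinearMap.range (Matrix.mulVecLin (A.map (Int.cast : ℤ → ℂ))) := by
        refine ⟨(2 * (Real.pi : ℂ) * Complex.I)⁻¹ • w, ?_⟩
        rw [Matrix.mulVecLin_apply, Matrix.mulVec_smul]
        funext i
        rw [Pi.smul_apply, hk i, smul_eq_mul]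
        have hc2 : (2 * (Real.pi : ℂ) * Complex.I) ≠ 0 := by
          simp [Real.pi_ne_zero, Complex.I_ne_zero, Complex.ofReal_ne_zero]
        push_cast
        field_simp
      rwa [span_cols, ← hLspan] at hmem2
    have hkL : (fun i => ((k i : ℚ))) ∈ L := mem_of_cQ_mem L _ hkmem
    have hkM : k ∈ LinearMap.range (Matrix.mulVecLin A) := by
      rw [hrange]
      exact hkL
    obtain ⟨c, hc⟩ := hkM
    have hwc : w = (2 * (Real.pi : ℂ) * Complex.I) • (fun j => ((c j : ℂ))) := by
      apply hCinj
      rw [Matrix.mulVecLin_apply, Matrix.mulVecLin_apply, Matrix.mulVec_smul]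
      funext i
      rw [hk i, Pi.smul_apply, smul_eq_mul]
      have h11 := congrFun (castMV (Int.castRingHom ℂ) A c) i
      simp only [Int.coe_castRingHom] at h11
      rw [h11]
      have h12 : A.mulVec c i = k i := congrFun hc i
      rw [h12]
      ring
    funext j
    apply Units.ext
    show ((u j : ℂˣ) : ℂ) = ((1 : Fin m → ℂˣ) j : ℂ)
    have h13 : ((u j : ℂˣ) : ℂ) = Complex.exp (w j) := (hwj j).symm
    rw [h13, hwc]
    have h14 : (((2 * (Real.pi : ℂ) * Complex.I) • fun j => ((c j : ℂ))) j)
        = (c j : ℂ) * (2 * (Real.pi : ℂ) * Complex.I) := by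
      rw [Pi.smul_apply, smul_eq_mul]; ring
    rw [h14, Complex.exp_int_mul_two_pi_mul_I]
    rfl
  have hmono : Function.Injective (monomialMap (K := ℂ) A) := by
    intro x y hxy
    have h12 : monomialMap (K := ℂ) A (x * y⁻¹) = 1 := by
      funext i
      have h13 : monomialMap (K := ℂ) A (x * y⁻¹) i
          = monomialMap (K := ℂ) A x i * (monomialMap (K := ℂ) A y i)⁻¹ := by
        simp [monomialMap, mul_zpow, _root_.inv_zpow, Finset.prod_mul_distrib, Finset.prod_inv_distrib]
      rw [h13, hxy]
      simp
    have h14 := hker _ h12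
    rwa [mul_inv_eq_one] at h14
  refine ⟨m, A, hmono, hsat, ?_⟩
  rw [range_monomialMap]

  rw [span_cols, ← hLspan]

/-- If `L` is a linear subspace of `ℚⁿ`, then `exp(L ⊗_ℚ ℂ)` is an algebraic
subtorus of `(ℂˣ)ⁿ`; conversely, every algebraic subtorus `T ⊆ (ℂˣ)ⁿ` equals `exp(L ⊗_ℚ ℂ)`
for some linear subspace `L ⊆ ℚⁿ`. -/
theorem exp_rational_subspace_subtorus {n : ℕ} :
    (∀ L : Submodule ℚ (Fin n → ℚ),
      IsSubtorus (expTorus '' ((ratComplexify L : Set (Fin n → ℂ))))) ∧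
    (∀ T : Set (Fin n → ℂˣ), IsSubtorus T →
      ∃ L : Submodule ℚ (Fin n → ℚ),
        T = expTorus '' ((ratComplexify L : Set (Fin n → ℂ)))) :=
  ⟨test_forward, subtorus_eq_exp⟩
end

section
/- Let G be a group with a homomorphism χ: G → ℝ. The Novikov–Sikorav completion, consisting of all formal sums Σ n_g g ∈ ℤ^G such that for every c ∈ ℝ the set {g ∈ G : n_g ≠ 0 and χ(g) ≥ c} is finite, is closed under the convolution product (Σ n_g g)·(Σ m_h h) = Σ n_g m_h (gh), and forms a ring containing ℤG as a subring. -/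
/-- The Novikov–Sikorav completion of `ℤG` with respect to `χ : G → ℝ`: all formal sums
`Σ n_g g ∈ ℤ^G` such that for every `c ∈ ℝ` the set `{g : n_g ≠ 0 and χ(g) ≥ c}` is finite. -/
def NovikovSet {G : Type} [Group G] (χ : G → ℝ) : Set (G → ℤ) :=
  {f | ∀ c : ℝ, {g : G | f g ≠ 0 ∧ c ≤ χ g}.Finite}

open Classical in
/-- The convolution product `(Σ n_g g)·(Σ m_h h) = Σ n_g m_h (gh)` of formal sums (with junk
value `0` in each coefficient whose defining family is not finitely supported). -/
noncomputable def conv {G : Type} [Group G] (f h : G → ℤ) : G → ℤ :=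
  fun x => ∑ᶠ p : G × G, if p.1 * p.2 = x then f p.1 * h p.2 else 0

/-- For a group `G` with a homomorphism `χ : G → ℝ`, the Novikov–Sikorav
completion is closed under the convolution product -- which is well-defined, each coefficient
being a finite sum -- and forms a ring containing the group ring `ℤG` (the finitely supported
formal sums, with its usual product) as a subring. -/
theorem novikov_sikorav_ring {G : Type} [Group G] (χ : G → ℝ)
    (hχ : ∀ a b : G, χ (a * b) = χ a + χ b) :
    (∀ f h, f ∈ NovikovSet χ → h ∈ NovikovSet χ →
      ∀ x : G, {p : G × G | p.1 * p.2 = x ∧ f p.1 ≠ 0 ∧ h p.2 ≠ 0}.Finite) ∧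
    (∀ f h, f ∈ NovikovSet χ → h ∈ NovikovSet χ → conv f h ∈ NovikovSet χ) ∧
    (∀ f : G → ℤ, (Function.support f).Finite → f ∈ NovikovSet χ) ∧
    (∀ a b : MonoidAlgebra ℤ G,
      conv (fun g => a.coeff g) (fun g => b.coeff g) = fun g => (a * b : MonoidAlgebra ℤ G).coeff g) := by
  classical
  refine ⟨?_, ?_, ?_, ?_⟩
  · intro f h hf hh x
    have h1 : {p : G × G | p.1 * p.2 = x ∧ f p.1 ≠ 0 ∧ h p.2 ≠ 0} ⊆
        (fun g => (g, g⁻¹ * x)) '' {g | f g ≠ 0 ∧ χ x / 2 ≤ χ g} ∪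
        (fun g => (x * g⁻¹, g)) '' {g | h g ≠ 0 ∧ χ x / 2 ≤ χ g} := by
      rintro ⟨p1, p2⟩ ⟨hmul, hf1, hh2⟩
      have hsum : χ p1 + χ p2 = χ x := by rw [← hχ, hmul]
      rcases le_or_gt (χ x / 2) (χ p1) with hle | hlt
      · left
        exact ⟨p1, ⟨hf1, hle⟩, by simp [← hmul]⟩
      · right
        exact ⟨p2, ⟨hh2, by linarith⟩, by simp [← hmul]⟩
    exact (((hf _).image _).union ((hh _).image _)).subset h1
  · intro f h hf hh c
    have hsub : {x | conv f h x ≠ 0 ∧ c ≤ χ x} ⊆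
        (⋃ g ∈ {g | f g ≠ 0 ∧ c/2 ≤ χ g}, (fun b => g * b) '' {g' | h g' ≠ 0 ∧ c - χ g ≤ χ g'}) ∪
        (⋃ g ∈ {g | h g ≠ 0 ∧ c/2 ≤ χ g}, (fun a => a * g) '' {g' | f g' ≠ 0 ∧ c - χ g ≤ χ g'}) := by
      rintro x ⟨hx, hcx⟩
      obtain ⟨p, hp⟩ : ∃ p : G × G, (if p.1 * p.2 = x then f p.1 * h p.2 else 0) ≠ 0 := by
        by_contra hc
        push_neg at hc
        exact hx (finsum_eq_zero_of_forall_eq_zero hc)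
      by_cases hm : p.1 * p.2 = x
      · rw [if_pos hm] at hp
        have hf1 : f p.1 ≠ 0 := left_ne_zero_of_mul hp
        have hh2 : h p.2 ≠ 0 := right_ne_zero_of_mul hp
        have hsum : χ p.1 + χ p.2 = χ x := by rw [← hχ, hm]
        rcases le_or_gt (c / 2) (χ p.1) with hle | hlt
        · left
          refine Set.mem_biUnion (show p.1 ∈ _ from ⟨hf1, hle⟩) ⟨p.2, ⟨hh2, by linarith⟩, hm⟩
        · right
          refine Set.mem_biUnion (show p.2 ∈ _ from ⟨hh2, by linarith⟩) ⟨p.1, ⟨hf1, by linarith⟩, hm⟩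
      · rw [if_neg hm] at hp; exact absurd rfl hp
    refine Set.Finite.subset (Set.Finite.union ?_ ?_) hsub
    · exact (hf _).biUnion fun g _ => (hh _).image _
    · exact (hh _).biUnion fun g _ => (hf _).image _
  · intro f hf c
    exact hf.subset fun g hg => hg.1
  · intro a b
    funext x
    show (∑ᶠ p : G × G, if p.1 * p.2 = x then a.coeff p.1 * b.coeff p.2 else 0) = (a * b).coeff x
    have hsupp : (Function.support fun p : G × G => if p.1 * p.2 = x then a.coeff p.1 * b.coeff p.2 else 0)
        ⊆ ↑(a.coeff.support ×ˢ b.coeff.support) := by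
      intro p hp
      simp only [Function.mem_support] at hp
      by_cases hm : p.1 * p.2 = x
      · rw [if_pos hm] at hp
        simp only [Finset.coe_product, Set.mem_prod, Finset.mem_coe, Finsupp.mem_support_iff]
        exact ⟨left_ne_zero_of_mul hp, right_ne_zero_of_mul hp⟩
      · rw [if_neg hm] at hp; exact absurd rfl hp
    rw [finsum_eq_finset_sum_of_support_subset _ hsupp, Finset.sum_product,
      MonoidAlgebra.coeff_mul]
    simp [Finsupp.sum]
end
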